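/- Let X be a real Hilbert space, let T : X → X be a continuous linear nonexpansive operator with F := Fix T, and let (λ_n) be any sequence in [0,1]. Let x_0 ∈ X, write f_0 := P_F x_0 and g_0 := P_{F^⊥} x_0, and define x_{n+1} := (1−λ_n)x_n + λ_n T x_n for all n. Then for every n, x_{n+1} = P_F x_0 + T_{λ_n} T_{λ_{n−1}} ⋯ T_{λ_0} g_0. -/

import Mathlib

open Filter Topology

/-- For a continuous linear nonexpansive operator `T` on a real Hilbert space with
`F := Fix T = ker (Id - T)`, any `(λₙ)` in `[0,1]`, and the iteration
`xₙ₊₁ = (1-λₙ)xₙ + λₙ T xₙ`, we have `xₙ₊₁ = P_F x₀ + T_{λₙ}⋯T_{λ₀} g₀` where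
`g₀ = P_{F^⊥} x₀` and `y` is the orbit of `g₀` (i.e. `y₀ = g₀`, `yₙ₊₁ = T_{λₙ} yₙ`,
so `yₙ₊₁ = T_{λₙ}⋯T_{λ₀} g₀`). -/
theorem km_iterate_decomposition
    {X : Type*} [NormedAddCommGroup X] [InnerProductSpace ℝ X] [CompleteSpace X]
    (T : X →L[ℝ] X) (hT : ∀ x : X, ‖T x‖ ≤ ‖x‖)
    (lam : ℕ → ℝ) (hlam : ∀ n, lam n ∈ Set.Icc (0 : ℝ) 1)
    (x : ℕ → X) (hx : ∀ n, x (n + 1) = (1 - lam n) • x n + lam n • T (x n))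
    (y : ℕ → X)
    (hy0 : y 0 =
      (Submodule.orthogonalProjectionOnto (LinearMap.ker ((ContinuousLinearMap.id ℝ X - T : X →L[ℝ] X) : X →ₗ[ℝ] X))ᗮ (x 0) : X))
    (hy : ∀ n, y (n + 1) = (1 - lam n) • y n + lam n • T (y n)) :
    ∀ n : ℕ, x (n + 1) =
      (Submodule.orthogonalProjectionOnto (LinearMap.ker ((ContinuousLinearMap.id ℝ X - T : X →L[ℝ] X) : X →ₗ[ℝ] X)) (x 0) : X)
        + y (n + 1) := by
  set F := LinearMap.ker ((ContinuousLinearMap.id ℝ X - T : X →L[ℝ] X) : X →ₗ[ℝ] X) with hF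
  set p : X := (Submodule.orthogonalProjectionOnto F (x 0) : X) with hp
  have hpF : p ∈ F := (Submodule.orthogonalProjectionOnto F (x 0)).2
  have hTp : T p = p := by
    have := hpF
    rw [hF, LinearMap.mem_ker] at this
    rw [ContinuousLinearMap.coe_coe, ContinuousLinearMap.sub_apply, ContinuousLinearMap.id_apply, sub_eq_zero] at this
    exact this.symm
  have key : ∀ n, x n = p + y n := by
    intro n
    induction n with
    | zero =>
      rw [hy0, hp]
      exact (F.starProjection_add_starProjection_orthogonal (x 0)).symm
    | succ n ih =>
      rw [hx n, hy n, ih, map_add, hTp]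
      rw [smul_add, smul_add]
      have h1 : (1 - lam n) • p + lam n • p = p := by
        rw [← add_smul]; simp
      calc (1 - lam n) • p + (1 - lam n) • y n + (lam n • p + lam n • T (y n))
          = ((1 - lam n) • p + lam n • p) + ((1 - lam n) • y n + lam n • T (y n)) := by abel
        _ = p + ((1 - lam n) • y n + lam n • T (y n)) := by rw [h1]
  intro n
  exact key (n + 1)
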